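/- Let G = (V, E, ends) be a multigraph and let f be a weak parking function of G. Then the vector (f(v))_{v∈V} is a partial score vector of G, i.e., there exists a partial orientation o of G whose score vector equals (f(v))_{v∈V}. -/

import Mathlib

open Finset

/-- `d̂_S(v)`: the number of edges joining `v` to `(V ∖ S) ∪ {v}`
(loops at `v` counted once each). -/
def dhat {V E : Type*} [Fintype V] [Fintype E] [DecidableEq V]
    (ends : E → Sym2 V) (S : Finset V) (v : V) : ℕ :=
  (Finset.univ.filter fun e : E => ∃ u : V, ends e = s(v, u) ∧ (u = v ∨ u ∉ S)).card

/-- A weak parking function of a multigraph: for every nonempty `S ⊆ V` there is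
`v ∈ S` with `f v ≤ d̂_S(v)`. -/
def IsWeakParkingFunction {V E : Type*} [Fintype V] [Fintype E] [DecidableEq V]
    (ends : E → Sym2 V) (f : V → ℕ) : Prop :=
  ∀ S : Finset V, S.Nonempty → ∃ v ∈ S, f v ≤ dhat ends S v

/-- A partial orientation of a multigraph. -/
def IsPartialOrientation {V E : Type*} (ends : E → Sym2 V) (o : E → Option V) : Prop :=
  ∀ e v, o e = some v → v ∈ ends e

/-- The score vector of a partial orientation. -/
def scoreVector {V E : Type*} [Fintype E] [DecidableEq V]
    (o : E → Option V) (v : V) : ℕ :=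
  (Finset.univ.filter fun e => o e = some v).card

theorem weakParkingFunction_aux
    {V E : Type*} [Fintype V] [Fintype E] [DecidableEq V]
    (ends : E → Sym2 V) (f : V → ℕ)
    (hf : IsWeakParkingFunction ends f) (S : Finset V) :
    ∃ o : E → Option V, IsPartialOrientation ends o ∧
      (∀ e w, o e = some w → w ∈ S) ∧ ∀ v ∈ S, scoreVector o v = f v := by
  classical
  induction S using Finset.strongInduction with
  | _ S ih =>
    rcases S.eq_empty_or_nonempty with rfl | hS
    · exact ⟨fun _ => none, fun e v h => by simp at h, fun e w h => by simp at h,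
        fun v hv => by simp at hv⟩
    · obtain ⟨v, hv, hfv⟩ := hf S hS
      obtain ⟨o', ho'1, ho'2, ho'3⟩ := ih (S.erase v) (Finset.erase_ssubset hv)
      obtain ⟨C, hCsub, hCcard⟩ := Finset.exists_subset_card_eq
        (s := Finset.univ.filter fun e : E => ∃ u : V, ends e = s(v, u) ∧ (u = v ∨ u ∉ S))
        (n := f v) hfv
      refine ⟨fun e => if e ∈ C then some v else o' e, ?_, ?_, ?_⟩
      · intro e w h
        by_cases hc : e ∈ C
        · simp only [hc, if_true, Option.some.injEq] at h
          subst h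
          obtain ⟨u, hu, -⟩ := (Finset.mem_filter.1 (hCsub hc)).2
          rw [hu]; exact Sym2.mem_mk_left v u
        · simp only [hc, if_false] at h
          exact ho'1 e w h
      · intro e w h
        by_cases hc : e ∈ C
        · simp only [hc, if_true, Option.some.injEq] at h
          subst h; exact hv
        · simp only [hc, if_false] at h
          exact Finset.mem_of_mem_erase (ho'2 e w h)
      · intro w hw
        by_cases hwv : w = v
        · subst hwv
          have : (Finset.univ.filter fun e =>
              (if e ∈ C then some w else o' e) = some w) = C := by
            ext e
            simp only [Finset.mem_filter, Finset.mem_univ, true_and]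
            by_cases hc : e ∈ C
            · simp [hc]
            · simp only [hc, if_false, iff_false]
              intro h
              exact absurd (ho'2 e w h) (by simp)
          rw [scoreVector, this, hCcard]
        · have hw' : w ∈ S.erase v := Finset.mem_erase.2 ⟨hwv, hw⟩
          have : (Finset.univ.filter fun e =>
              (if e ∈ C then some v else o' e) = some w) =
              (Finset.univ.filter fun e => o' e = some w) := by
            ext e
            simp only [Finset.mem_filter, Finset.mem_univ, true_and]
            by_cases hc : e ∈ C
            · simp only [hc, if_true, Option.some.injEq]
              constructor
              · intro h; exact absurd h.symm hwv
              · intro h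
                obtain ⟨u, hu, hcase⟩ := (Finset.mem_filter.1 (hCsub hc)).2
                have hwm : w ∈ ends e := ho'1 e w h
                rw [hu, Sym2.mem_iff] at hwm
                rcases hwm with rfl | rfl
                · rfl
                · rcases hcase with rfl | hns
                  · rfl
                  · exact absurd hw hns
            · simp [hc]
          rw [scoreVector, this]
          exact ho'3 w hw'

/-- The vector of values of a weak parking function is a partial score vector. -/
theorem weakParkingFunction_isPartialScoreVector
    {V E : Type*} [Fintype V] [Fintype E] [DecidableEq V]
    (ends : E → Sym2 V) (f : V → ℕ)
    (hf : IsWeakParkingFunction ends f) :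
    ∃ o : E → Option V, IsPartialOrientation ends o ∧ scoreVector o = f := by
  obtain ⟨o, h1, -, h3⟩ := weakParkingFunction_aux ends f hf Finset.univ
  exact ⟨o, h1, funext fun v => h3 v (Finset.mem_univ v)⟩
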